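/- Every connected subspace of a maximal connected space is maximal connected. -/

import Mathlib

open Set TopologicalSpace Topology

/-- A topology is maximal connected if it is connected and no strictly finer topology
is connected. -/
def MaximalConnected {X : Type*} (t : TopologicalSpace X) : Prop :=
  @ConnectedSpace X t ∧ ∀ s : TopologicalSpace X, s < t → ¬ @ConnectedSpace X s

/-- every connected subspace of a maximal connected space is maximal
connected. -/
theorem stmt_7 {X : Type*} [t : TopologicalSpace X] (h : MaximalConnected t)
    (Y : Set X) (hY : ConnectedSpace Y) :
    MaximalConnected (TopologicalSpace.induced (fun y : Y => (y : X)) t) := by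
  constructor
  · exact hY
  · intro s hsi hcs
    set i : TopologicalSpace Y := TopologicalSpace.induced (fun y : Y => (y : X)) t with hi
    -- the generating family for the extension topology
    set 𝒢 : Set (Set X) :=
      {U | IsOpen[t] U ∨ ∃ A : Set Y, IsOpen[s] A ∧ U = Subtype.val '' A ∪ (closure[t] Y)ᶜ}
      with h𝒢
    set t' : TopologicalSpace X := TopologicalSpace.generateFrom 𝒢 with ht'
    -- preimage computation
    have hpre : ∀ A : Set Y,
        (fun y : Y => (y : X)) ⁻¹' (Subtype.val '' A ∪ (closure[t] Y)ᶜ) = A := by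
      intro A
      ext y
      simp only [preimage_union, mem_union, mem_preimage, mem_compl_iff]
      constructor
      · rintro (hy | hy)
        · obtain ⟨z, hz, hzy⟩ := hy
          rwa [show z = y from Subtype.ext hzy] at hz
        · exact absurd ((@subset_closure X t Y) y.2) hy
      · intro hy
        exact Or.inl ⟨y, hy, rfl⟩
    -- t' is finer than t
    have ht'le : t' ≤ t := by
      rw [TopologicalSpace.le_def]
      intro U hU
      exact TopologicalSpace.GenerateOpen.basic U (Or.inl hU)
    have hDopen : IsOpen[t] (closure[t] Y)ᶜ := (@isOpen_compl_iff X (closure[t] Y) t).mpr (@isClosed_closure X t Y)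
    -- structural lemma about t'-open sets
    have hP : ∀ U : Set X, IsOpen[t'] U → ∀ x ∈ U,
        (x ∉ closure[t] Y →
          ∃ V : Set X, IsOpen[t] V ∧ x ∈ V ∧ V ∩ (closure[t] Y)ᶜ ⊆ U) ∧
        (x ∈ closure[t] Y → x ∉ Y → ∃ V : Set X, IsOpen[t] V ∧ x ∈ V ∧ V ⊆ U) ∧
        (∀ hx : x ∈ Y, ∃ (V : Set X) (A : Set Y), IsOpen[t] V ∧ IsOpen[s] A ∧ x ∈ V ∧
          (⟨x, hx⟩ : Y) ∈ A ∧ V ∩ (Subtype.val '' A ∪ (closure[t] Y)ᶜ) ⊆ U) := by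
      intro U hU
      induction hU with
      | basic U hU' =>
        rcases hU' with hU' | ⟨A, hA, rfl⟩
        · intro x hx
          refine ⟨fun _ => ⟨U, hU', hx, inter_subset_left⟩,
            fun _ _ => ⟨U, hU', hx, subset_rfl⟩, fun hxY => ?_⟩
          exact ⟨U, univ, hU', @isOpen_univ Y s, hx, mem_univ _, inter_subset_left⟩
        · intro x hx
          refine ⟨fun hxD => ⟨univ, @isOpen_univ X t, mem_univ _, fun z hz => Or.inr hz.2⟩,
            fun hxD hxY => ?_, fun hxY => ?_⟩
          · rcases hx with hx | hx
            · obtain ⟨z, _, hzx⟩ := hx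
              exact absurd (hzx ▸ z.2) hxY
            · exact absurd hxD hx
          · refine ⟨univ, A, @isOpen_univ X t, hA, mem_univ _, ?_, fun z hz => hz.2⟩
            rcases hx with hx | hx
            · obtain ⟨z, hz, hzx⟩ := hx
              rwa [show (⟨x, hxY⟩ : Y) = z from Subtype.ext hzx.symm]
            · exact absurd ((@subset_closure X t Y) hxY) hx
      | univ =>
        intro x _
        exact ⟨fun _ => ⟨univ, @isOpen_univ X t, mem_univ _, subset_univ _⟩,
          fun _ _ => ⟨univ, @isOpen_univ X t, mem_univ _, subset_univ _⟩,
          fun hxY => ⟨univ, univ, @isOpen_univ X t, @isOpen_univ Y s, mem_univ _,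
            mem_univ _, subset_univ _⟩⟩
      | inter U₁ U₂ h1 h2 ih1 ih2 =>
        intro x hx
        obtain ⟨c1, c2, c3⟩ := ih1 x hx.1
        obtain ⟨d1, d2, d3⟩ := ih2 x hx.2
        refine ⟨fun hxD => ?_, fun hxD hxY => ?_, fun hxY => ?_⟩
        · obtain ⟨V₁, hV₁, hxV₁, hs₁⟩ := c1 hxD
          obtain ⟨V₂, hV₂, hxV₂, hs₂⟩ := d1 hxD
          exact ⟨V₁ ∩ V₂, @IsOpen.inter X t _ _ hV₁ hV₂, ⟨hxV₁, hxV₂⟩,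
            fun z hz => ⟨hs₁ ⟨hz.1.1, hz.2⟩, hs₂ ⟨hz.1.2, hz.2⟩⟩⟩
        · obtain ⟨V₁, hV₁, hxV₁, hs₁⟩ := c2 hxD hxY
          obtain ⟨V₂, hV₂, hxV₂, hs₂⟩ := d2 hxD hxY
          exact ⟨V₁ ∩ V₂, @IsOpen.inter X t _ _ hV₁ hV₂, ⟨hxV₁, hxV₂⟩,
            fun z hz => ⟨hs₁ hz.1, hs₂ hz.2⟩⟩
        · obtain ⟨V₁, A₁, hV₁, hA₁, hxV₁, hxA₁, hs₁⟩ := c3 hxY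
          obtain ⟨V₂, A₂, hV₂, hA₂, hxV₂, hxA₂, hs₂⟩ := d3 hxY
          refine ⟨V₁ ∩ V₂, A₁ ∩ A₂, @IsOpen.inter X t _ _ hV₁ hV₂, @IsOpen.inter Y s _ _ hA₁ hA₂,
            ⟨hxV₁, hxV₂⟩, ⟨hxA₁, hxA₂⟩, fun z hz => ?_⟩
          have hz1 : z ∈ V₁ ∩ (Subtype.val '' A₁ ∪ (closure[t] Y)ᶜ) := by
            refine ⟨hz.1.1, ?_⟩
            rcases hz.2 with hz2 | hz2
            · exact Or.inl (image_mono inter_subset_left hz2)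
            · exact Or.inr hz2
          have hz2 : z ∈ V₂ ∩ (Subtype.val '' A₂ ∪ (closure[t] Y)ᶜ) := by
            refine ⟨hz.1.2, ?_⟩
            rcases hz.2 with hz2 | hz2
            · exact Or.inl (image_mono inter_subset_right hz2)
            · exact Or.inr hz2
          exact ⟨hs₁ hz1, hs₂ hz2⟩
      | sUnion S hS ih =>
        intro x hx
        obtain ⟨U₀, hU₀S, hxU₀⟩ := hx
        obtain ⟨c1, c2, c3⟩ := ih U₀ hU₀S x hxU₀
        have hsub : U₀ ⊆ ⋃₀ S := subset_sUnion_of_mem hU₀S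
        refine ⟨fun hxD => ?_, fun hxD hxY => ?_, fun hxY => ?_⟩
        · obtain ⟨V, hV, hxV, hs₁⟩ := c1 hxD
          exact ⟨V, hV, hxV, hs₁.trans hsub⟩
        · obtain ⟨V, hV, hxV, hs₁⟩ := c2 hxD hxY
          exact ⟨V, hV, hxV, hs₁.trans hsub⟩
        · obtain ⟨V, A, hV, hA, hxV, hxA, hs₁⟩ := c3 hxY
          exact ⟨V, A, hV, hA, hxV, hxA, hs₁.trans hsub⟩
    have hYne : Y.Nonempty := by
      obtain ⟨y⟩ := hcs.toNonempty
      exact ⟨y, y.2⟩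
    -- key auxiliary lemma: a t'-clopen set disjoint from Y is empty
    have aux : ∀ U : Set X, IsOpen[t'] U → IsOpen[t'] Uᶜ → U ∩ Y = ∅ → U = ∅ := by
      intro U hUo hUco hUY
      have hxY : ∀ x ∈ U, x ∉ Y := fun x hx hy => by
        rw [eq_empty_iff_forall_notMem] at hUY; exact hUY x ⟨hx, hy⟩
      have hUt : IsOpen[t] U := by
        rw [@isOpen_iff_forall_mem_open X t U]
        intro x hx
        by_cases hxD : x ∈ closure[t] Y
        · obtain ⟨V, hV, hxV, hVU⟩ := (hP U hUo x hx).2.1 hxD (hxY x hx)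
          exact ⟨V, hVU, hV, hxV⟩
        · obtain ⟨V, hV, hxV, hVU⟩ := (hP U hUo x hx).1 hxD
          exact ⟨V ∩ (closure[t] Y)ᶜ, hVU, @IsOpen.inter X t _ _ hV hDopen, ⟨hxV, hxD⟩⟩
      have hUD : ∀ x ∈ U, x ∉ closure[t] Y := by
        intro x hx hxD
        obtain ⟨z, hzU, hzY⟩ := (@mem_closure_iff X t x Y).mp hxD U hUt hx
        exact hxY z hzU hzY
      have hUct : IsOpen[t] Uᶜ := by
        rw [@isOpen_iff_forall_mem_open X t Uᶜ]
        intro x hx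
        by_cases hxYm : x ∈ Y
        · obtain ⟨V, A, hV, hA, hxV, hxA, hsub⟩ := (hP Uᶜ hUco x hx).2.2 hxYm
          refine ⟨V, fun z hz => ?_, hV, hxV⟩
          by_contra hzU
          simp only [mem_compl_iff, not_not] at hzU
          exact (hsub ⟨hz, Or.inr (hUD z hzU)⟩) hzU
        · by_cases hxD : x ∈ closure[t] Y
          · obtain ⟨V, hV, hxV, hVU⟩ := (hP Uᶜ hUco x hx).2.1 hxD hxYm
            exact ⟨V, hVU, hV, hxV⟩
          · obtain ⟨V, hV, hxV, hVU⟩ := (hP Uᶜ hUco x hx).1 hxD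
            exact ⟨V ∩ (closure[t] Y)ᶜ, hVU, @IsOpen.inter X t _ _ hV hDopen, ⟨hxV, hxD⟩⟩
      have hclopen : @IsClopen X t U := ⟨(@isOpen_compl_iff X U t).mp hUct, hUt⟩
      rcases (@isClopen_iff X t h.1.toPreconnectedSpace U).mp hclopen with h0 | h1
      · exact h0
      · obtain ⟨y, hy⟩ := hYne
        exact absurd (h1 ▸ (mem_univ y : y ∈ univ)) fun hyU => hxY y hyU hy
    -- Subtype.val is continuous from (Y, s) to (X, t')
    have hcont : Continuous[s, t'] (fun y : Y => (y : X)) := by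
      rw [ht', continuous_generateFrom_iff]
      intro U hU
      rcases hU with hU | ⟨A, hA, rfl⟩
      · have hio : IsOpen[i] ((fun y : Y => (y : X)) ⁻¹' U) := by
          rw [hi]
          exact (@isOpen_induced_iff Y X t _ _).mpr ⟨U, hU, rfl⟩
        exact (TopologicalSpace.le_def.mp hsi.le) _ hio
      · rw [hpre A]
        exact hA
    -- t' is a connected topology
    have hpre' : @PreconnectedSpace X t' := by
      refine @preconnectedSpace_of_forall_constant X t' fun f hf x y => ?_
      have hclo : @IsClopen X t' (f ⁻¹' {true}) :=
        @IsClopen.preimage X Bool t' _ {true} (isClopen_discrete _) f hf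
      have hcloY : @IsClopen Y s ((fun y : Y => (y : X)) ⁻¹' (f ⁻¹' {true})) :=
        @IsClopen.preimage Y X s t' _ hclo _ hcont
      rcases (@isClopen_iff Y s (@ConnectedSpace.toPreconnectedSpace Y s hcs) _).mp hcloY
        with h0 | h1
      · have hUY : f ⁻¹' {true} ∩ Y = ∅ := by
          rw [eq_empty_iff_forall_notMem]
          rintro z ⟨hz1, hz2⟩
          rw [eq_empty_iff_forall_notMem] at h0
          exact h0 ⟨z, hz2⟩ hz1
        have hU0 := aux _ hclo.2 ((@isOpen_compl_iff X _ t').mpr hclo.1) hUY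
        have hfz : ∀ z : X, f z = false := by
          intro z
          cases hfz : f z
          · rfl
          · exact absurd (hU0 ▸ (hfz : f z = true) : z ∈ (∅ : Set X)) (notMem_empty z)
        rw [hfz x, hfz y]
      · have hUY : (f ⁻¹' {true})ᶜ ∩ Y = ∅ := by
          rw [eq_empty_iff_forall_notMem]
          rintro z ⟨hz1, hz2⟩
          refine hz1 ?_
          have hmem : (⟨z, hz2⟩ : Y) ∈ ((fun y : Y => (y : X)) ⁻¹' (f ⁻¹' {true})) := by
            rw [h1]; exact mem_univ _
          exact hmem
        have hU0 := aux _ ((@isOpen_compl_iff X _ t').mpr hclo.1)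
          (by rw [compl_compl]; exact hclo.2) hUY
        have hfz : ∀ z : X, f z = true := by
          intro z
          by_contra hfz
          have hzc : z ∈ (f ⁻¹' {true})ᶜ := fun hz => hfz hz
          exact absurd (hU0 ▸ hzc : z ∈ (∅ : Set X)) (notMem_empty z)
        rw [hfz x, hfz y]
    have hconn' : @ConnectedSpace X t' := @ConnectedSpace.mk X t' hpre' h.1.toNonempty
    -- t' is strictly finer than t
    have hne : t' ≠ t := by
      intro heq
      obtain ⟨hle, hnle⟩ := lt_iff_le_not_ge.mp hsi
      have hex : ∃ A : Set Y, IsOpen[s] A ∧ ¬ IsOpen[i] A := by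
        by_contra hc
        push_neg at hc
        exact hnle (TopologicalSpace.le_def.mpr fun A hA => hc A hA)
      obtain ⟨A, hA, hAni⟩ := hex
      have hGopen : IsOpen[t'] (Subtype.val '' A ∪ (closure[t] Y)ᶜ) :=
        TopologicalSpace.GenerateOpen.basic _ (Or.inr ⟨A, hA, rfl⟩)
      rw [heq] at hGopen
      refine hAni ?_
      rw [hi]
      exact (@isOpen_induced_iff Y X t _ _).mpr ⟨_, hGopen, hpre A⟩
    exact h.2 t' (lt_of_le_of_ne ht'le hne) hconn'
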